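/- Let (V_j) be a sequence of nonempty compact subsets of 𝔻̄² such that for every j and every polynomial function p in the two complex coordinates, sup_{z ∈ V_j} |p(z)| = sup_{z ∈ V_j ∩ ∂𝔻̄²} |p(z)| (in particular each V_j meets ∂𝔻̄²). Suppose V_j converges in the Hausdorff metric to a compact set V with V ∩ ∂𝔻̄² nonempty. Then for every polynomial function p in the two coordinates, sup_{z ∈ V} |p(z)| = sup_{z ∈ V ∩ ∂𝔻̄²} |p(z)|; consequently the polynomial hull of V ∩ ∂𝔻̄² equals the polynomial hull of V. -/

import Mathlib

noncomputable def pev (q : MvPolynomial (Fin 2) ℂ) (z : ℂ × ℂ) : ℂ :=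
  MvPolynomial.eval ![z.1, z.2] q

def bidisk : Set (ℂ × ℂ) := {z : ℂ × ℂ | ‖z.1‖ ≤ 1 ∧ ‖z.2‖ ≤ 1}

def polyHull (Y : Set (ℂ × ℂ)) : Set (ℂ × ℂ) :=
  {z : ℂ × ℂ | ∀ (q : MvPolynomial (Fin 2) ℂ) (M : ℝ),
    (∀ y ∈ Y, ‖pev q y‖ ≤ M) → ‖pev q z‖ ≤ M}

lemma pev_continuous (q : MvPolynomial (Fin 2) ℂ) : Continuous (pev q) := by
  have h1 : Continuous fun z : ℂ × ℂ => (![z.1, z.2] : Fin 2 → ℂ) := by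
    apply continuous_pi
    intro i
    fin_cases i
    · simpa using continuous_fst
    · simpa using continuous_snd
  exact (MvPolynomial.continuous_eval (p := q)).comp h1

lemma bidisk_eq : bidisk = Metric.closedBall (0:ℂ) 1 ×ˢ Metric.closedBall (0:ℂ) 1 := by
  ext z
  simp [bidisk, Set.mem_prod, Metric.mem_closedBall, dist_zero_right]

lemma bidisk_compact : IsCompact bidisk := by
  rw [bidisk_eq]
  exact (isCompact_closedBall _ _).prod (isCompact_closedBall _ _)

theorem stmt7 (V : ℕ → Set (ℂ × ℂ))
    (hne : ∀ j, (V j).Nonempty) (hcpt : ∀ j, IsCompact (V j))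
    (hsub : ∀ j, V j ⊆ bidisk)
    (hsup : ∀ j, ∀ q : MvPolynomial (Fin 2) ℂ,
      sSup ((fun z => ‖pev q z‖) '' V j) =
        sSup ((fun z => ‖pev q z‖) '' (V j ∩ frontier bidisk)))
    (W : Set (ℂ × ℂ)) (hW : IsCompact W)
    (hconv : Filter.Tendsto (fun j => Metric.hausdorffDist (V j) W) Filter.atTop (nhds 0))
    (hWb : (W ∩ frontier bidisk).Nonempty) :
    (∀ q : MvPolynomial (Fin 2) ℂ,
      sSup ((fun z => ‖pev q z‖) '' W) =
        sSup ((fun z => ‖pev q z‖) '' (W ∩ frontier bidisk))) ∧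
      polyHull (W ∩ frontier bidisk) = polyHull W := by
  have hWne : W.Nonempty := hWb.mono Set.inter_subset_left
  -- Hausdorff edist finiteness
  have hfin : ∀ j, EMetric.hausdorffEdist (V j) W ≠ ⊤ := fun j =>
    Metric.hausdorffEdist_ne_top_of_nonempty_of_bounded (hne j) hWne
      (hcpt j).isBounded hW.isBounded
  -- W ⊆ bidisk
  have hWsub : W ⊆ bidisk := by
    intro w hw
    have h0 : Metric.infDist w bidisk ≤ 0 := by
      refine ge_of_tendsto hconv (Filter.Eventually.of_forall fun j => ?_)
      calc Metric.infDist w bidisk ≤ Metric.infDist w (V j) :=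
            Metric.infDist_le_infDist_of_subset (hsub j) (hne j)
        _ ≤ Metric.hausdorffDist W (V j) :=
            Metric.infDist_le_hausdorffDist_of_mem hw
              (by rw [EMetric.hausdorffEdist_comm]; exact hfin j)
        _ = Metric.hausdorffDist (V j) W := Metric.hausdorffDist_comm ..
    have hz : Metric.infDist w bidisk = 0 := le_antisymm h0 Metric.infDist_nonneg
    exact (bidisk_compact.isClosed.mem_iff_infDist_zero ⟨_, (hsub 0 (hne 0).choose_spec)⟩).mpr hz
  -- V j ∩ frontier bidisk is nonempty
  have hVbne : ∀ j, (V j ∩ frontier bidisk).Nonempty := by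
    intro j
    by_contra h
    rw [Set.not_nonempty_iff_eq_empty] at h
    have := hsup j 1
    rw [h] at this
    have h1 : (fun z => ‖pev (1 : MvPolynomial (Fin 2) ℂ) z‖) '' V j = {1} := by
      obtain ⟨v, hv⟩ := hne j
      apply Set.eq_singleton_iff_nonempty_unique_mem.mpr
      refine ⟨⟨_, Set.mem_image_of_mem _ hv⟩, ?_⟩
      rintro x ⟨y, -, rfl⟩
      simp [pev]
    rw [h1] at this
    simp at this
  -- main sup statement
  have main : ∀ q : MvPolynomial (Fin 2) ℂ,
      sSup ((fun z => ‖pev q z‖) '' W) =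
        sSup ((fun z => ‖pev q z‖) '' (W ∩ frontier bidisk)) := by
    intro q
    set f : ℂ × ℂ → ℝ := fun z => ‖pev q z‖ with hf
    have hfc : Continuous f := (pev_continuous q).norm
    have hbddW : BddAbove (f '' W) := (hW.image hfc).bddAbove
    have hbddV : ∀ j, BddAbove (f '' V j) := fun j => ((hcpt j).image hfc).bddAbove
    refine le_antisymm ?_ (csSup_le_csSup hbddW (hWb.image f)
      (Set.image_mono (f := f) Set.inter_subset_left))
    -- the hard direction
    refine le_of_forall_pos_le_add ?_
    intro ε hε
    -- uniform continuity on bidisk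
    obtain ⟨δ, hδ, hδ'⟩ := (Metric.uniformContinuousOn_iff.mp
      (bidisk_compact.uniformContinuousOn_of_continuous hfc.continuousOn)) (ε/2) (by linarith)
    -- maximizers on V j ∩ frontier bidisk
    have hVbcpt : ∀ j, IsCompact (V j ∩ frontier bidisk) := fun j =>
      (hcpt j).inter_right isClosed_frontier
    choose x hx hfx using fun j =>
      (hVbcpt j).exists_sSup_image_eq (hVbne j) hfc.continuousOn
    -- subsequence converging to a ∈ W ∩ frontier bidisk
    obtain ⟨a, ha, φ, hφ, hxa⟩ := bidisk_compact.tendsto_subseq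
      (x := x) (fun j => hsub j (hx j).1)
    have hafr : a ∈ frontier bidisk :=
      isClosed_frontier.mem_of_tendsto hxa (Filter.Eventually.of_forall fun k => (hx _).2)
    have hconvφ : Filter.Tendsto (fun k => Metric.hausdorffDist (V (φ k)) W)
        Filter.atTop (nhds 0) := hconv.comp hφ.tendsto_atTop
    have haW : a ∈ W := by
      have h1 : Filter.Tendsto (fun k => Metric.infDist (x (φ k)) W) Filter.atTop
          (nhds (Metric.infDist a W)) :=
        ((Metric.continuous_infDist_pt W).continuousAt.tendsto).comp hxa
      have h2 : Metric.infDist a W ≤ 0 := by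
        refine le_of_tendsto_of_tendsto h1 hconvφ (Filter.Eventually.of_forall fun k => ?_)
        exact Metric.infDist_le_hausdorffDist_of_mem ((hx (φ k)).1) (hfin (φ k))
      exact (hW.isClosed.mem_iff_infDist_zero hWne).mpr
        (le_antisymm h2 Metric.infDist_nonneg)
    -- f (x (φ k)) → f a
    have hfxa : Filter.Tendsto (fun k => f (x (φ k))) Filter.atTop (nhds (f a)) :=
      (hfc.continuousAt.tendsto).comp hxa
    have hfaB : f a ≤ sSup (f '' (W ∩ frontier bidisk)) :=
      le_csSup ((hW.inter_right isClosed_frontier).image hfc).bddAbove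
        (Set.mem_image_of_mem f ⟨haW, hafr⟩)
    -- choose a good index
    have hev : ∀ᶠ k in Filter.atTop,
        Metric.hausdorffDist (V (φ k)) W < δ ∧ dist (f (x (φ k))) (f a) < ε/2 := by
      filter_upwards [hconvφ.eventually (gt_mem_nhds hδ),
        hfxa.eventually (Metric.ball_mem_nhds (f a) (by linarith : (0:ℝ) < ε/2))] with k h1 h2
      exact ⟨h1, h2⟩
    obtain ⟨k, hk1, hk2⟩ := hev.exists
    set j := φ k
    -- sSup over W ≤ f (x j) + ε/2
    refine csSup_le (hWne.image f) ?_
    rintro b ⟨w, hw, rfl⟩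
    obtain ⟨v, hv, hvd⟩ := Metric.exists_dist_lt_of_hausdorffDist_lt hw
      (by rwa [Metric.hausdorffDist_comm] : Metric.hausdorffDist W (V j) < δ)
      (by rw [EMetric.hausdorffEdist_comm]; exact hfin j)
    have h1 : dist (f w) (f v) < ε/2 := hδ' w (hWsub hw) v (hsub j hv) hvd
    have h2 : f v ≤ sSup (f '' V j) := le_csSup (hbddV j) (Set.mem_image_of_mem f hv)
    have h3 : sSup (f '' V j) = f (x j) := by rw [hsup j q]; exact hfx j
    have hk2' : |f (x j) - f a| < ε/2 := by rwa [Real.dist_eq] at hk2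
    have h1' : |f w - f v| < ε/2 := by rwa [Real.dist_eq] at h1
    have h4 : f (x j) ≤ f a + ε/2 := by linarith [(abs_sub_lt_iff.mp hk2').1]
    have h5 : f w ≤ f v + ε/2 := by linarith [(abs_sub_lt_iff.mp h1').1]
    calc f w ≤ f v + ε/2 := h5
      _ ≤ f (x j) + ε/2 := by rw [← h3]; linarith
      _ ≤ f a + ε := by linarith
      _ ≤ sSup (f '' (W ∩ frontier bidisk)) + ε := by linarith
  refine ⟨main, ?_⟩
  apply Set.Subset.antisymm
  · intro z hz q M hM
    exact hz q M fun y hy => hM y hy.1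
  · intro z hz q M hM
    apply hz q M
    intro y hy
    have h1 : ‖pev q y‖ ≤ sSup ((fun z => ‖pev q z‖) '' W) :=
      le_csSup (hW.image (pev_continuous q).norm).bddAbove (Set.mem_image_of_mem _ hy)
    have h2 : sSup ((fun z => ‖pev q z‖) '' (W ∩ frontier bidisk)) ≤ M :=
      csSup_le (hWb.image _) (by rintro b ⟨y', hy', rfl⟩; exact hM y' hy')
    calc ‖pev q y‖ ≤ _ := h1
      _ = _ := main q
      _ ≤ M := h2
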